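/- Let ρ > 0 and w ~ N(0, ρ²) with moments m_t = E[w^t], and B_T = (m_{i+j})_{0≤i,j≤T} its Hankel matrix of moments. Then tr(B_T)/m_{2T} → 1 as T → ∞; consequently λ_max(B_T)/m_{2T} → 1 and the dominance ratio λ_max(B_T)/tr(B_T) → 1 as T → ∞. -/

import Mathlib

open MeasureTheory ProbabilityTheory Filter
open Matrix Real Set
open scoped NNReal

section Aux
lemma seq_sum_div_tendsto_zero (c : ℕ → ℝ) (hpos : ∀ k, 0 < c k)
    (hmono : Monotone fun k => c (k + 1) / c k)
    (hub : ∀ R : ℝ, ∃ k, R ≤ c (k + 1) / c k)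
    (hctop : Tendsto c atTop atTop) :
    Tendsto (fun T => (∑ k ∈ Finset.range T, c k) / c T) atTop (nhds 0) := by
  set r : ℕ → ℝ := fun k => c (k + 1) / c k with hr
  have hrtop : Tendsto r atTop atTop :=
    tendsto_atTop_atTop_of_monotone hmono (by intro b; obtain ⟨k, hk⟩ := hub b; exact ⟨k, hk⟩)
  obtain ⟨K, hK⟩ := hub 2
  have hge : ∀ k, K ≤ k → 2 * c k ≤ c (k + 1) := by
    intro k hk
    have h2 : (2 : ℝ) ≤ r k := le_trans hK (hmono hk)
    have := (le_div_iff₀ (hpos k)).mp h2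
    linarith
  -- sum over Ico K (T+1) bounded by 2 * c T
  have hIco : ∀ T, K ≤ T → (∑ k ∈ Finset.Ico K (T + 1), c k) ≤ 2 * c T := by
    intro T hT
    induction T, hT using Nat.le_induction with
    | base =>
      rw [Finset.sum_Ico_eq_sum_range]
      simp
      linarith [hpos K]
    | succ T hT ih =>
      rw [Finset.sum_Ico_succ_top (by omega)]
      have := hge T hT
      linarith
  set A := ∑ k ∈ Finset.range K, c k with hA
  have hbound : ∀ T, K + 1 ≤ T → (∑ k ∈ Finset.range T, c k) / c T
      ≤ A / c T + 2 * (r (T - 1))⁻¹ := by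
    intro T hT
    have hT1 : T - 1 + 1 = T := by omega
    have hsplit : (∑ k ∈ Finset.range T, c k)
        = A + ∑ k ∈ Finset.Ico K T, c k := (Finset.sum_range_add_sum_Ico _ (by omega)).symm
    have h2 : (∑ k ∈ Finset.Ico K T, c k) ≤ 2 * c (T - 1) := by
      have := hIco (T - 1) (by omega)
      rwa [hT1] at this
    have hrinv : c (T - 1) / c T = (r (T - 1))⁻¹ := by
      rw [hr]; simp only [hT1, inv_div]
    rw [hsplit, add_div]
    gcongr ?_ + ?_
    · exact le_refl _
    · calc (∑ k ∈ Finset.Ico K T, c k) / c T ≤ (2 * c (T - 1)) / c T := by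
            gcongr; exact (hpos T).le
        _ = 2 * (c (T - 1) / c T) := by ring
        _ = 2 * (r (T - 1))⁻¹ := by rw [hrinv]
  have hczero : Tendsto (fun T => A / c T) atTop (nhds 0) :=
    Tendsto.div_atTop tendsto_const_nhds hctop
  have hrinv0 : Tendsto (fun T => 2 * (r (T - 1))⁻¹) atTop (nhds 0) := by
    have h1 : Tendsto (fun T : ℕ => T - 1) atTop atTop :=
      tendsto_atTop_atTop_of_monotone (fun a b h => Nat.sub_le_sub_right h 1)
        (fun b => ⟨b + 1, by omega⟩)
    have := (tendsto_inv_atTop_zero.comp (hrtop.comp h1)).const_mul (2 : ℝ)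
    simpa using this
  have hg0 : Tendsto (fun T => A / c T + 2 * (r (T - 1))⁻¹) atTop (nhds 0) := by
    simpa using hczero.add hrinv0
  apply squeeze_zero'
  · filter_upwards with T
    exact div_nonneg (Finset.sum_nonneg fun k _ => (hpos k).le) (hpos T).le
  · filter_upwards [eventually_ge_atTop (K + 1)] with T hT
    exact hbound T hT
  · exact hg0

section MatrixAux
variable {n : ℕ} {A : Matrix (Fin (n+1)) (Fin (n+1)) ℝ} (hA : A.IsHermitian)

lemma my_trace_eq_sum_eig : A.trace = ∑ i, hA.eigenvalues i := by
  nth_rewrite 1 [hA.spectral_theorem]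
  rw [Unitary.conjStarAlgAut_apply, Matrix.trace_mul_cycle,
    (Matrix.mem_unitaryGroup_iff').mp hA.eigenvectorUnitary.2, one_mul, Matrix.trace_diagonal]
  simp

lemma my_row_sq_sum (i : Fin (n+1)) :
    ∑ j, ((hA.eigenvectorUnitary : Matrix (Fin (n+1)) (Fin (n+1)) ℝ) i j) ^ 2 = 1 := by
  have h : (hA.eigenvectorUnitary : Matrix (Fin (n+1)) (Fin (n+1)) ℝ) *
      star (hA.eigenvectorUnitary : Matrix (Fin (n+1)) (Fin (n+1)) ℝ) = 1 :=
    (Matrix.mem_unitaryGroup_iff).mp hA.eigenvectorUnitary.2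
  have := congrFun (congrFun h i) i
  simp only [Matrix.mul_apply, Matrix.one_apply, if_pos rfl, ↓reduceIte, star_apply, star_trivial] at this
  simp only [pow_two]
  convert this using 2 with j

lemma my_diag_eq (i : Fin (n+1)) :
    A i i = ∑ j, hA.eigenvalues j *
      ((hA.eigenvectorUnitary : Matrix (Fin (n+1)) (Fin (n+1)) ℝ) i j) ^ 2 := by
  nth_rewrite 1 [hA.spectral_theorem]
  simp only [Unitary.conjStarAlgAut_apply, Matrix.star_apply, Matrix.mul_apply, Function.comp_apply, RCLike.ofReal_real_eq_id,
    id_eq, conjTranspose_apply, star_trivial, Finset.sum_mul, Finset.mul_sum]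
  rw [Finset.sum_comm]
  congr 1 with j
  rw [Finset.sum_eq_single j]
  · rw [Matrix.diagonal_apply_eq]; simp [pow_two]; ring
  · intro b _ hb; rw [Matrix.diagonal_apply_ne _ (Ne.symm hb)]; ring
  · simp

lemma my_diag_le_sup (i : Fin (n+1)) : A i i ≤ ⨆ j, hA.eigenvalues j := by
  have hbdd : BddAbove (Set.range hA.eigenvalues) := Set.Finite.bddAbove (Set.finite_range _)
  rw [my_diag_eq hA i]
  calc ∑ j, hA.eigenvalues j * ((hA.eigenvectorUnitary : Matrix (Fin (n+1)) (Fin (n+1)) ℝ) i j) ^ 2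
      ≤ ∑ j, (⨆ j', hA.eigenvalues j') *
        ((hA.eigenvectorUnitary : Matrix (Fin (n+1)) (Fin (n+1)) ℝ) i j) ^ 2 := by
        apply Finset.sum_le_sum
        intro j _
        exact mul_le_mul_of_nonneg_right (le_ciSup hbdd j) (sq_nonneg _)
    _ = ⨆ j', hA.eigenvalues j' := by
        rw [← Finset.mul_sum, my_row_sq_sum hA i, mul_one]

lemma my_sup_le_trace (hpsd : A.PosSemidef) :
    (⨆ j, hA.eigenvalues j) ≤ A.trace := by
  rw [my_trace_eq_sum_eig hA]
  apply ciSup_le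
  intro j
  exact Finset.single_le_sum (fun i _ => hpsd.eigenvalues_nonneg i) (Finset.mem_univ j)

end MatrixAux

lemma my_pow_le_exp {b : ℝ} (hb : 0 < b) (n : ℕ) (x : ℝ) :
    |x| ^ n * Real.exp (-b * x ^ 2) ≤
      (1 + n.factorial * (2 / b) ^ n) * Real.exp (-(b / 2) * x ^ 2) := by
  have h1 : |x| ^ n ≤ 1 + x ^ (2 * n) := by
    have hx2n : (0:ℝ) ≤ x ^ (2 * n) := by
      rw [pow_mul]; positivity
    rcases le_total (|x|) 1 with h | h
    · have : |x| ^ n ≤ 1 := pow_le_one₀ (abs_nonneg x) h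
      linarith
    · have h2 : |x| ^ n ≤ |x| ^ (2 * n) := by
        apply pow_le_pow_right₀ h; omega
      have h3 : |x| ^ (2 * n) = x ^ (2 * n) := by
        rw [pow_mul, pow_mul, sq_abs]
      linarith
  have h2 : x ^ (2 * n) ≤ n.factorial * (2 / b) ^ n * Real.exp (b / 2 * x ^ 2) := by
    have hy : (0:ℝ) ≤ b / 2 * x ^ 2 := by positivity
    have hexp : (b / 2 * x ^ 2) ^ n / n.factorial ≤ Real.exp (b / 2 * x ^ 2) := by
      calc (b / 2 * x ^ 2) ^ n / n.factorial
          ≤ ∑ i ∈ Finset.range (n + 1), (b / 2 * x ^ 2) ^ i / i.factorial := by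
            refine Finset.single_le_sum (f := fun i => (b / 2 * x ^ 2) ^ i / (i.factorial : ℝ))
              (fun i _ => by positivity) (Finset.self_mem_range_succ n)
        _ ≤ Real.exp (b / 2 * x ^ 2) := by
            simpa using Real.sum_le_exp_of_nonneg hy (n + 1)
    have hfac : (0:ℝ) < n.factorial := by positivity
    have := (div_le_iff₀ hfac).mp hexp
    have hx2n : x ^ (2 * n) = (b / 2 * x ^ 2) ^ n * (2 / b) ^ n := by
      rw [mul_pow, pow_mul]
      field_simp
      rw [mul_assoc, ← mul_pow, div_mul_div_comm, mul_comm b 2, div_self (by positivity : (2:ℝ) * b ≠ 0), one_pow, mul_one]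
    rw [hx2n]
    nlinarith [pow_nonneg (by positivity : (0:ℝ) ≤ 2 / b) n, Real.exp_pos (b / 2 * x ^ 2)]
  have hmono : Real.exp (-b * x ^ 2) ≤ Real.exp (-(b / 2) * x ^ 2) := by
    apply Real.exp_le_exp.mpr; nlinarith [sq_nonneg x]
  have hen : (0:ℝ) < Real.exp (-b * x ^ 2) := Real.exp_pos _
  calc |x| ^ n * Real.exp (-b * x ^ 2)
      ≤ (1 + x ^ (2*n)) * Real.exp (-b * x ^ 2) := by
        apply mul_le_mul_of_nonneg_right h1 hen.le
    _ ≤ Real.exp (-b * x ^ 2) + n.factorial * (2 / b) ^ n * Real.exp (b / 2 * x ^ 2)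
          * Real.exp (-b * x ^ 2) := by
        rw [add_mul, one_mul]
        gcongr
    _ = Real.exp (-b * x ^ 2) + n.factorial * (2 / b) ^ n * Real.exp (-(b/2) * x ^ 2) := by
        rw [mul_assoc, ← Real.exp_add]; ring_nf
    _ ≤ (1 + n.factorial * (2 / b) ^ n) * Real.exp (-(b / 2) * x ^ 2) := by
        rw [add_mul, one_mul]
        gcongr

lemma my_integrable_pow_mul_exp {b : ℝ} (hb : 0 < b) (n : ℕ) :
    Integrable (fun x : ℝ => x ^ n * Real.exp (-b * x ^ 2)) := by
  apply Integrable.mono' ((integrable_exp_neg_mul_sq (by positivity : (0:ℝ) < b/2)).const_mul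
    (1 + n.factorial * (2 / b) ^ n))
  · exact (Continuous.mul (continuous_pow n)
      ((continuous_const.mul (continuous_pow 2)).rexp)).aestronglyMeasurable
  · filter_upwards with x
    rw [norm_mul, norm_pow, Real.norm_eq_abs, Real.norm_eq_abs,
      abs_of_pos (Real.exp_pos _)]
    exact my_pow_le_exp hb n x

lemma gauss_integrable_pow (v : ℝ≥0) (hv : v ≠ 0) (n : ℕ) :
    Integrable (fun x => x ^ n) (gaussianReal 0 v) := by
  rw [gaussianReal_of_var_ne_zero 0 hv]
  rw [integrable_withDensity_iff_integrable_smul' (measurable_gaussianPDF 0 v)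
    (Filter.Eventually.of_forall fun x => ENNReal.ofReal_lt_top)]
  have hvpos : (0:ℝ) < v := by positivity
  have hb : (0:ℝ) < ((2:ℝ) * v)⁻¹ := by positivity
  apply Integrable.congr ((my_integrable_pow_mul_exp hb n).const_mul (√(2 * π * v))⁻¹)
  filter_upwards with x
  rw [gaussianPDF, ENNReal.toReal_ofReal (gaussianPDFReal_nonneg 0 v x), smul_eq_mul,
    gaussianPDFReal]
  rw [show -((2:ℝ) * ↑v)⁻¹ * x ^ 2 = -(x - 0) ^ 2 / (2 * ↑v) by ring]
  ring

lemma gauss_Ici_ne_zero (v : ℝ≥0) (hv : v ≠ 0) (a : ℝ) :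
    gaussianReal 0 v (Ici a) ≠ 0 := by
  rw [gaussianReal_apply 0 hv]
  intro h0
  have hae := (setLIntegral_eq_zero_iff measurableSet_Ici (measurable_gaussianPDF 0 v)).mp h0
  have h1 := ae_iff.mp hae
  have h2 : {x : ℝ | ¬ (x ∈ Ici a → gaussianPDF 0 v x = 0)} = Ici a := by
    ext x; simp [(gaussianPDF_pos 0 hv x).ne']
  rw [h2, Real.volume_Ici] at h1
  exact ENNReal.top_ne_zero h1

lemma gauss_Ici_toReal_pos (v : ℝ≥0) (hv : v ≠ 0) (a : ℝ) :
    0 < ((gaussianReal 0 v) (Ici a)).toReal :=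
  ENNReal.toReal_pos (gauss_Ici_ne_zero v hv a) (measure_ne_top _ _)

lemma gauss_tail (v : ℝ≥0) (hv : v ≠ 0) (k : ℕ) {a : ℝ} (ha : 0 ≤ a) :
    a ^ (2 * k) * ((gaussianReal 0 v) (Ici a)).toReal ≤ ∫ x, x ^ (2 * k) ∂(gaussianReal 0 v) := by
  have hint := gauss_integrable_pow v hv (2 * k)
  calc a ^ (2 * k) * ((gaussianReal 0 v) (Ici a)).toReal
      ≤ ∫ x in Ici a, x ^ (2 * k) ∂(gaussianReal 0 v) := by
        have := setIntegral_ge_of_const_le_real measurableSet_Ici (measure_ne_top _ _)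
          (fun x hx => pow_le_pow_left₀ ha hx _) hint.integrableOn
        rwa [measureReal_def] at this
    _ ≤ ∫ x, x ^ (2 * k) ∂(gaussianReal 0 v) :=
        setIntegral_le_integral hint
          (Filter.Eventually.of_forall fun x => (even_two_mul k).pow_nonneg x)

lemma gauss_m_pos (v : ℝ≥0) (hv : v ≠ 0) (k : ℕ) :
    0 < ∫ x, x ^ (2 * k) ∂(gaussianReal 0 v) := by
  calc (0:ℝ) < 1 ^ (2 * k) * ((gaussianReal 0 v) (Ici 1)).toReal := by
        simpa using gauss_Ici_toReal_pos v hv 1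
    _ ≤ _ := gauss_tail v hv k zero_le_one

lemma gauss_cs (v : ℝ≥0) (hv : v ≠ 0) (k : ℕ) :
    (∫ x, x ^ (2 * (k + 1)) ∂(gaussianReal 0 v)) ^ 2 ≤
      (∫ x, x ^ (2 * k) ∂(gaussianReal 0 v)) * (∫ x, x ^ (2 * (k + 2)) ∂(gaussianReal 0 v)) := by
  set ν := gaussianReal 0 v
  have hmem : ∀ m : ℕ, MemLp (fun x : ℝ => |x| ^ m) (ENNReal.ofReal 2) ν := by
    intro m
    rw [show ENNReal.ofReal (2:ℝ) = 2 by norm_num]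
    rw [memLp_two_iff_integrable_sq (show AEStronglyMeasurable (fun x : ℝ => |x| ^ m) ν from
      ((continuous_abs.pow m)).aestronglyMeasurable)]
    apply (gauss_integrable_pow v hv (2 * m)).congr
    filter_upwards with x
    rw [show 2 * m = m * 2 by ring, pow_mul, ← sq_abs (x ^ m), abs_pow]
  have hconj : (2:ℝ).HolderConjugate 2 := Real.HolderConjugate.two_two
  have hcs := integral_mul_le_Lp_mul_Lq_of_nonneg (μ := ν) hconj
    (Filter.Eventually.of_forall fun x => by positivity)
    (Filter.Eventually.of_forall fun x => by positivity) (hmem k) (hmem (k + 2))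
  have hfg : ∀ x : ℝ, |x| ^ k * |x| ^ (k + 2) = x ^ (2 * (k + 1)) := by
    intro x
    rw [← pow_add, show k + (k + 2) = 2 * (k + 1) by ring, pow_mul, sq_abs, ← pow_mul]
  have hf2 : ∀ x : ℝ, (|x| ^ k : ℝ) ^ (2:ℝ) = x ^ (2 * k) := by
    intro x
    rw [show ((|x| ^ k : ℝ) ^ (2:ℝ)) = (|x| ^ k) ^ (2:ℕ) by
      rw [← Real.rpow_natCast (|x| ^ k) 2]; norm_num]
    rw [← pow_mul, mul_comm k 2, pow_mul, sq_abs, ← pow_mul]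
  have hg2 : ∀ x : ℝ, (|x| ^ (k+2) : ℝ) ^ (2:ℝ) = x ^ (2 * (k + 2)) := by
    intro x
    rw [show ((|x| ^ (k+2) : ℝ) ^ (2:ℝ)) = (|x| ^ (k+2)) ^ (2:ℕ) by
      rw [← Real.rpow_natCast (|x| ^ (k+2)) 2]; norm_num]
    rw [← pow_mul, mul_comm (k+2) 2, pow_mul, sq_abs, ← pow_mul]
  rw [integral_congr_ae (Filter.Eventually.of_forall hfg),
    integral_congr_ae (Filter.Eventually.of_forall hf2),
    integral_congr_ae (Filter.Eventually.of_forall hg2)] at hcs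
  set a := ∫ x, x ^ (2 * k) ∂ν
  set b := ∫ x, x ^ (2 * (k + 2)) ∂ν
  set c := ∫ x, x ^ (2 * (k + 1)) ∂ν
  have ha : 0 < a := gauss_m_pos v hv k
  have hb : 0 < b := gauss_m_pos v hv (k + 2)
  have hc : 0 < c := gauss_m_pos v hv (k + 1)
  have h1 : c ≤ a ^ ((1:ℝ)/2) * b ^ ((1:ℝ)/2) := hcs
  have h2 : a ^ ((1:ℝ)/2) * b ^ ((1:ℝ)/2) = Real.sqrt (a * b) := by
    rw [← Real.sqrt_eq_rpow, ← Real.sqrt_eq_rpow, Real.sqrt_mul ha.le]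
  rw [h2] at h1
  calc c ^ 2 ≤ Real.sqrt (a * b) ^ 2 := by
        apply pow_le_pow_left₀ hc.le h1
    _ = a * b := Real.sq_sqrt (by positivity)

lemma psd_key (v : ℝ≥0) (hv : v ≠ 0) (m : ℕ → ℝ)
    (hm : ∀ t, m t = ∫ x, x ^ t ∂(gaussianReal 0 v))
    (T : ℕ) (B : Matrix (Fin (T + 1)) (Fin (T + 1)) ℝ)
    (hBdef : ∀ (i j : Fin (T + 1)), B i j = m ((i : ℕ) + (j : ℕ)))
    (hB : B.IsHermitian) : B.PosSemidef := by
  refine Matrix.PosSemidef.of_dotProduct_mulVec_nonneg hB (fun x => ?_)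
  have hkey : x ⬝ᵥ B.mulVec x = ∫ t, (∑ i, x i * t ^ (i : ℕ)) ^ 2 ∂(gaussianReal 0 v) := by
    have hrhs : ∀ t : ℝ, (∑ i, x i * t ^ (i : ℕ)) ^ 2
        = ∑ i, ∑ j, x i * x j * t ^ ((i : ℕ) + (j : ℕ)) := by
      intro t
      rw [pow_two, Finset.sum_mul_sum]
      apply Finset.sum_congr rfl; intro i _
      apply Finset.sum_congr rfl; intro j _
      rw [pow_add]; ring
    rw [integral_congr_ae (Filter.Eventually.of_forall hrhs)]
    have e1 := integral_finset_sum (μ := gaussianReal 0 v) Finset.univ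
      (f := fun (i : Fin (T+1)) (a : ℝ) => ∑ j : Fin (T+1), x i * x j * a ^ ((i:ℕ)+(j:ℕ)))
      (fun i _ => integrable_finset_sum _ (fun j _ =>
        ((gauss_integrable_pow v hv ((i : ℕ) + (j : ℕ))).const_mul (x i * x j))))
    rw [e1]
    simp only [dotProduct, Matrix.mulVec, dotProduct]
    apply Finset.sum_congr rfl; intro i _
    have e2 := integral_finset_sum (μ := gaussianReal 0 v) Finset.univ
      (f := fun (j : Fin (T+1)) (a : ℝ) => x i * x j * a ^ ((i:ℕ)+(j:ℕ)))
      (fun j _ => ((gauss_integrable_pow v hv ((i : ℕ) + (j : ℕ))).const_mul (x i * x j)))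
    rw [e2, Finset.mul_sum]
    apply Finset.sum_congr rfl; intro j _
    show x i * (B i j * x j) = ∫ (a : ℝ), x i * x j * a ^ ((i:ℕ) + (j:ℕ)) ∂(gaussianReal 0 v)
    rw [MeasureTheory.integral_const_mul, hBdef i j, hm]
    ring
  have : (star x) ⬝ᵥ B.mulVec x = x ⬝ᵥ B.mulVec x := by rw [star_trivial]
  rw [this, hkey]
  exact integral_nonneg fun t => sq_nonneg _

end Aux

theorem stmt7 (ρ : ℝ) (hρ : 0 < ρ)
    (m : ℕ → ℝ)
    (hm : ∀ t, m t = ∫ x, x ^ t ∂(gaussianReal 0 (Real.toNNReal (ρ ^ 2))))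
    (B : (T : ℕ) → Matrix (Fin (T + 1)) (Fin (T + 1)) ℝ)
    (hBdef : ∀ T (i j : Fin (T + 1)), B T i j = m ((i : ℕ) + (j : ℕ)))
    (hB : ∀ T, (B T).IsHermitian) :
    Tendsto (fun T => (B T).trace / m (2 * T)) atTop (nhds 1) ∧
    Tendsto (fun T => (⨆ i, (hB T).eigenvalues i) / m (2 * T)) atTop (nhds 1) ∧
    Tendsto (fun T => (⨆ i, (hB T).eigenvalues i) / (B T).trace) atTop (nhds 1) := by
  have hv : (Real.toNNReal (ρ ^ 2)) ≠ 0 := by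
    rw [Ne, Real.toNNReal_eq_zero, not_le]
    positivity
  set v := Real.toNNReal (ρ ^ 2) with hvdef
  set c : ℕ → ℝ := fun k => m (2 * k) with hc
  have hck : ∀ k, c k = ∫ x, x ^ (2 * k) ∂(gaussianReal 0 v) := fun k => hm (2 * k)
  have hcpos : ∀ k, 0 < c k := fun k => (hck k) ▸ gauss_m_pos v hv k
  have hcs : ∀ k, c (k + 1) ^ 2 ≤ c k * c (k + 2) := fun k => by
    rw [hck, hck, hck]; exact gauss_cs v hv k
  have hmono : Monotone (fun k => c (k + 1) / c k) := by
    apply monotone_nat_of_le_succ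
    intro k
    rw [div_le_div_iff₀ (hcpos k) (hcpos (k + 1))]
    nlinarith [hcs k]
  have htail : ∀ (k : ℕ) (a : ℝ), 0 ≤ a →
      a ^ (2 * k) * ((gaussianReal 0 v) (Ici a)).toReal ≤ c k := fun k a ha =>
    (hck k) ▸ gauss_tail v hv k ha
  have hub : ∀ R : ℝ, ∃ k, R ≤ c (k + 1) / c k := by
    intro R
    by_contra hcon
    push_neg at hcon
    set R' := max R 1 with hR'
    have hR1 : (1 : ℝ) ≤ R' := le_max_right _ _
    have hgrow : ∀ k, c k ≤ c 0 * R' ^ k := by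
      intro k
      induction k with
      | zero => simp
      | succ k ih =>
        have h1 : c (k + 1) / c k < R := hcon k
        have h2 : c (k + 1) < R * c k := (div_lt_iff₀ (hcpos k)).mp h1
        have h3 : c (k + 1) ≤ R' * c k := by
          nlinarith [hcpos k, le_max_left R 1]
        calc c (k + 1) ≤ R' * c k := h3
          _ ≤ R' * (c 0 * R' ^ k) := by nlinarith [hcpos k]
          _ = c 0 * R' ^ (k + 1) := by ring
    set t := ((gaussianReal 0 v) (Ici (2 * R'))).toReal with htdef
    have ht : 0 < t := gauss_Ici_toReal_pos v hv _
    obtain ⟨k, hk⟩ := pow_unbounded_of_one_lt (c 0 / t) (by norm_num : (1 : ℝ) < 4)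
    have h1 : (2 * R') ^ (2 * k) * t ≤ c k := htail k (2 * R') (by linarith)
    have h2 : (4 : ℝ) ^ k * R' ^ k ≤ (2 * R') ^ (2 * k) := by
      rw [pow_mul, show ((2 * R') ^ 2 : ℝ) = 4 * R' ^ 2 by ring]
      calc (4 : ℝ) ^ k * R' ^ k = (4 * R') ^ k := by rw [mul_pow]
        _ ≤ (4 * R' ^ 2) ^ k := pow_le_pow_left₀ (by linarith) (by nlinarith) k
    have h3 : t * (4 ^ k * R' ^ k) ≤ c 0 * R' ^ k := by
      nlinarith [hgrow k]
    have hRk : (0 : ℝ) < R' ^ k := by positivity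
    have h4 : t * 4 ^ k ≤ c 0 := by
      have h5 : (t * 4 ^ k) * R' ^ k ≤ c 0 * R' ^ k := by linarith [h3]
      exact le_of_mul_le_mul_right h5 hRk
    have h6 : c 0 < t * 4 ^ k := by
      have := (div_lt_iff₀ ht).mp hk
      linarith [this, mul_comm t ((4 : ℝ) ^ k)]
    linarith
  have hctop : Tendsto c atTop atTop := by
    set t := ((gaussianReal 0 v) (Ici 2)).toReal with htdef
    have ht : 0 < t := gauss_Ici_toReal_pos v hv 2
    apply tendsto_atTop_mono (fun k => ?_)
      ((tendsto_pow_atTop_atTop_of_one_lt (by norm_num : (1 : ℝ) < 4)).atTop_mul_const ht)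
    calc (4 : ℝ) ^ k * t = (2 : ℝ) ^ (2 * k) * t := by rw [pow_mul]; norm_num
      _ ≤ c k := htail k 2 (by norm_num)
  have hS := seq_sum_div_tendsto_zero c hcpos hmono hub hctop
  have htr : ∀ T, (B T).trace = ∑ k ∈ Finset.range (T + 1), c k := by
    intro T
    have hdiag : ∀ i : Fin (T + 1), (B T).diag i = c (i : ℕ) := by
      intro i
      rw [Matrix.diag_apply, hBdef, hc]
      simp [two_mul]
    rw [Matrix.trace, Finset.sum_congr rfl (fun i _ => hdiag i),
      Fin.sum_univ_eq_sum_range (fun k => c k)]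
  have hpart1 : Tendsto (fun T => (B T).trace / m (2 * T)) atTop (nhds 1) := by
    have h1 : Tendsto (fun T => (∑ k ∈ Finset.range T, c k) / c T + 1) atTop (nhds 1) := by
      simpa using hS.add (tendsto_const_nhds (x := (1 : ℝ)))
    apply h1.congr
    intro T
    show (∑ k ∈ Finset.range T, c k) / c T + 1 = (B T).trace / c T
    rw [htr T, Finset.sum_range_succ, add_div, div_self (hcpos T).ne']
  have hpsd : ∀ T, (B T).PosSemidef := fun T =>
    psd_key v hv m hm T (B T) (hBdef T) (hB T)
  have hL_le : ∀ T, (⨆ i, (hB T).eigenvalues i) ≤ (B T).trace := fun T =>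
    my_sup_le_trace (hB T) (hpsd T)
  have hc_le_L : ∀ T, c T ≤ ⨆ i, (hB T).eigenvalues i := by
    intro T
    have h1 := my_diag_le_sup (hB T) (Fin.last T)
    rw [hBdef] at h1
    calc c T = m ((Fin.last T : ℕ) + (Fin.last T : ℕ)) := by
          rw [hc]; simp [Fin.val_last, two_mul]
      _ ≤ _ := h1
  have hpart2 : Tendsto (fun T => (⨆ i, (hB T).eigenvalues i) / m (2 * T)) atTop (nhds 1) := by
    apply tendsto_of_tendsto_of_tendsto_of_le_of_le' (tendsto_const_nhds (x := (1:ℝ))) hpart1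
    · filter_upwards with T
      exact (one_le_div (hcpos T)).mpr (hc_le_L T)
    · filter_upwards with T
      have h := hcpos T
      show (⨆ i, (hB T).eigenvalues i) / c T ≤ (B T).trace / c T
      gcongr
      exact hL_le T
  refine ⟨hpart1, hpart2, ?_⟩
  have h3 := hpart2.div hpart1 one_ne_zero
  rw [show (1 : ℝ) / 1 = 1 by norm_num] at h3
  apply h3.congr
  intro T
  have hcT : c T ≠ 0 := (hcpos T).ne'
  have htrpos : 0 < (B T).trace := by
    rw [htr T]
    exact Finset.sum_pos (fun k _ => hcpos k) Finset.nonempty_range_add_one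
  show ((⨆ i, (hB T).eigenvalues i) / c T) / ((B T).trace / c T)
      = (⨆ i, (hB T).eigenvalues i) / (B T).trace
  rw [div_div_div_cancel_right₀ hcT]
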